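/- For every 0 < ε < 1 there exists a partition ℕ = ⋃_n I_n into finite sets and a pre-compact family F of finite subsets of ℕ such that: (a) F is not 4-large in any infinite M ⊆ ℕ (i.e. every infinite M has an infinite subset K with #(s∩K) ≤ 3 for all s∈F); (b) G_{1−ε}(F) = G_+(F) = the Schreier barrier {u ⊆ ℕ : #u = min u}; (c) for every s ∈ F, s ∩ I_n = I_n where n is minimal with s ∩ I_n ≠ ∅. Consequently T-families exist. -/

import Mathlib

noncomputable section

namespace TFaux

open Classical

variable (r : ℕ → ℕ)

def PS (n : ℕ) : Type := (ℓ : Fin n) → Fin n → Fin (r ℓ + 1)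

instance (n : ℕ) : Fintype (PS r n) := by unfold PS; infer_instance
instance (n : ℕ) : Nonempty (PS r n) := ⟨fun _ _ => ⟨0, Nat.succ_pos _⟩⟩

def csize (n : ℕ) : ℕ := Fintype.card (PS r n)

lemma csize_pos (n : ℕ) : 0 < csize r n := Fintype.card_pos

def S : ℕ → ℕ
  | 0 => 0
  | n + 1 => S n + csize r n

lemma S_strictMono : StrictMono (S r) :=
  strictMono_nat_of_lt_succ (fun n => by
    have := csize_pos r n
    simp only [S]
    omega)

lemma le_S (n : ℕ) : n ≤ S r n := by
  induction n with
  | zero => simp [S]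
  | succ n ih => have := csize_pos r n; simp only [S]; omega

def blk (n : ℕ) : Finset ℕ := Finset.Ico (S r n) (S r (n + 1))

lemma card_blk (n : ℕ) : (blk r n).card = csize r n := by
  have h : S r (n + 1) = S r n + csize r n := rfl
  rw [blk, Nat.card_Ico, h, Nat.add_sub_cancel_left]

lemma blk_nonempty (n : ℕ) : (blk r n).Nonempty := by
  rw [← Finset.card_pos, card_blk]; exact csize_pos r n

def pIdx (j : ℕ) : ℕ := Nat.findGreatest (fun n => S r n ≤ j) (j + 1)

lemma pIdx_spec (j : ℕ) : S r (pIdx r j) ≤ j ∧ j < S r (pIdx r j + 1) := by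
  constructor
  · exact Nat.findGreatest_spec (P := fun n => S r n ≤ j) (m := 0) (Nat.zero_le _) (Nat.zero_le j)
  · by_contra h
    push_neg at h
    have h1 : pIdx r j + 1 ≤ S r (pIdx r j + 1) := le_S r _
    have hb : pIdx r j + 1 ≤ j + 1 := by omega
    have h2 := Nat.le_findGreatest (P := fun n => S r n ≤ j) hb h
    have h3 : pIdx r j + 1 ≤ pIdx r j := h2
    omega

lemma mem_blk_pIdx (j : ℕ) : j ∈ blk r (pIdx r j) :=
  Finset.mem_Ico.mpr (pIdx_spec r j)

lemma pIdx_eq {j n : ℕ} (h : j ∈ blk r n) : pIdx r j = n := by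
  rw [blk, Finset.mem_Ico] at h
  have hs := pIdx_spec r j
  rcases lt_trichotomy (pIdx r j) n with hl | he | hg
  · have : S r (pIdx r j + 1) ≤ S r n := (S_strictMono r).monotone hl
    omega
  · exact he
  · have : S r (n + 1) ≤ S r (pIdx r j) := (S_strictMono r).monotone hg
    omega

lemma blk_disj {m n : ℕ} (h : m ≠ n) : Disjoint (blk r m) (blk r n) := by
  rw [Finset.disjoint_left]
  intro j hm hn
  exact h ((pIdx_eq r hm).symm.trans (pIdx_eq r hn))

def dec (n : ℕ) : {x // x ∈ blk r n} ≃ PS r n :=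
  Fintype.equivOfCardEq (by rw [Fintype.card_coe, card_blk]; rfl)

def Low (u : Finset ℕ) : ℕ := sInf {m : ℕ | m ∈ u}

lemma Low_mem {u : Finset ℕ} (hu : u.Nonempty) : Low u ∈ u :=
  Nat.sInf_mem (s := {m : ℕ | m ∈ u}) ⟨hu.choose, hu.choose_spec⟩

lemma Low_le {u : Finset ℕ} {x : ℕ} (hx : x ∈ u) : Low u ≤ x := Nat.sInf_le hx

lemma Low_eq_min' {u : Finset ℕ} (hu : u.Nonempty) : Low u = u.min' hu :=
  le_antisymm (Low_le (u.min'_mem hu)) (u.min'_le _ (Low_mem hu))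

def Pred (u : Finset ℕ) (n : ℕ) (a : PS r n) : Prop :=
  ∀ i j : Fin n, (i : ℕ) ∈ u → (j : ℕ) ∈ u → (i : ℕ) ≠ (j : ℕ) →
    ∀ hm : Low u < n, a ⟨Low u, hm⟩ i ≠ a ⟨Low u, hm⟩ j

def Dfin (u : Finset ℕ) (n : ℕ) : Finset ℕ :=
  ((blk r n).attach.filter (fun x => Pred r u n (dec r n x))).image Subtype.val

lemma Dfin_subset_blk (u : Finset ℕ) (n : ℕ) : Dfin r u n ⊆ blk r n := by
  intro x hx
  simp only [Dfin, Finset.mem_image, Finset.mem_filter] at hx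
  obtain ⟨y, _, rfl⟩ := hx
  exact y.2

lemma mem_Dfin {u : Finset ℕ} {n jj : ℕ} :
    jj ∈ Dfin r u n ↔ ∃ h : jj ∈ blk r n, Pred r u n (dec r n ⟨jj, h⟩) := by
  simp only [Dfin, Finset.mem_image, Finset.mem_filter, Finset.mem_attach, true_and]
  constructor
  · rintro ⟨⟨y, hy⟩, hp, rfl⟩
    exact ⟨hy, hp⟩
  · rintro ⟨h, hp⟩
    exact ⟨⟨jj, h⟩, hp, rfl⟩

lemma card_Dfin (u : Finset ℕ) (n : ℕ) :
    (Dfin r u n).card = Fintype.card {a : PS r n // Pred r u n a} := by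
  calc (Dfin r u n).card
      = ((blk r n).attach.filter (fun x => Pred r u n (dec r n x))).card :=
        Finset.card_image_of_injective _ Subtype.val_injective
    _ = (Finset.univ.filter (fun x : {x // x ∈ blk r n} => Pred r u n (dec r n x))).card := by
        rw [Finset.univ_eq_attach]
    _ = Fintype.card {x : {x // x ∈ blk r n} // Pred r u n (dec r n x)} :=
        (Fintype.card_subtype _).symm
    _ = Fintype.card {a : PS r n // Pred r u n a} :=
        Fintype.card_congr ((dec r n).subtypeEquiv (fun x => Iff.rfl))


lemma card_E_mul (u : Finset ℕ) (n : ℕ) (p : Fin n × Fin n) (hne : (p.1 : ℕ) ≠ (p.2 : ℕ)) :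
    (Finset.univ.filter (fun a : PS r n => ∃ hm : Low u < n,
        a ⟨Low u, hm⟩ p.1 = a ⟨Low u, hm⟩ p.2)).card * (r (Low u) + 1) ≤ csize r n := by
  classical
  by_cases hm : Low u < n
  · set mc : Fin n := ⟨Low u, hm⟩ with hmc
    set E := Finset.univ.filter (fun a : PS r n => ∃ hm : Low u < n,
        a ⟨Low u, hm⟩ p.1 = a ⟨Low u, hm⟩ p.2) with hE
    have hps : p.1 ≠ p.2 := fun hh => hne (congrArg Fin.val hh)
    have hinj : Function.Injective (fun (x : {a : PS r n // a ∈ E} × Fin (r (Low u) + 1)) =>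
        Function.update x.1.1 mc (Function.update (x.1.1 mc) p.2 x.2)) := by
      rintro ⟨⟨a, ha⟩, v⟩ ⟨⟨b, hb⟩, w⟩ h
      simp only at h
      have hmem : ∀ c : PS r n, c ∈ E → c mc p.1 = c mc p.2 := by
        intro c hc
        simp only [hE, Finset.mem_filter, Finset.mem_univ, true_and] at hc
        obtain ⟨hm', hc⟩ := hc
        exact hc
      have hc1 := congrFun h mc
      replace hc1 : Function.update (a mc) p.2 v = Function.update (b mc) p.2 w :=
        (Function.update_self mc (Function.update (a mc) p.2 v) a).symm.trans
          (hc1.trans (Function.update_self mc (Function.update (b mc) p.2 w) b))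
      have hvw : v = w := by
        have := congrFun hc1 p.2
        simpa [Function.update_self] using this
      have hab : a = b := by
        funext ℓ i
        by_cases hℓ : ℓ = mc
        · subst hℓ
          by_cases hi : i = p.2
          · subst hi
            have h1 := congrFun hc1 p.1
            rw [Function.update_of_ne hps, Function.update_of_ne hps] at h1
            exact (hmem a ha).symm.trans (h1.trans (hmem b hb))
          · have := congrFun hc1 i
            rwa [Function.update_of_ne hi, Function.update_of_ne hi] at this
        · have := congrFun h ℓ
          replace this : a ℓ = b ℓ :=
            (Function.update_of_ne hℓ (Function.update (a mc) p.2 v) a).symm.trans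
              (this.trans (Function.update_of_ne hℓ (Function.update (b mc) p.2 w) b))
          exact congrFun this i
      subst hvw
      subst hab
      rfl
    have hcard := Fintype.card_le_of_injective _ hinj
    have hcard2 : E.card * (r (Low u) + 1) ≤ Fintype.card (PS r n) := by
      rw [← Fintype.card_coe E, ← Fintype.card_fin (r (Low u) + 1), ← Fintype.card_prod]
      exact hcard
    exact hcard2
  · have : (Finset.univ.filter (fun a : PS r n => ∃ hm : Low u < n,
        a ⟨Low u, hm⟩ p.1 = a ⟨Low u, hm⟩ p.2)) = ∅ := by
      apply Finset.filter_false_of_mem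
      intro a _
      rintro ⟨hm', _⟩
      exact hm hm'
    simp [this]

lemma card_bad_mul (u : Finset ℕ) (n : ℕ) :
    Fintype.card {a : PS r n // ¬ Pred r u n a} * (r (Low u) + 1) ≤
      ((u.filter (· < n)).card * (u.filter (· < n)).card) * csize r n := by
  classical
  set pairsF : Finset (Fin n × Fin n) := Finset.univ.filter
      (fun p => (p.1 : ℕ) ∈ u ∧ (p.2 : ℕ) ∈ u ∧ (p.1 : ℕ) ≠ (p.2 : ℕ)) with hpairs
  set Ef : Fin n × Fin n → Finset (PS r n) := fun p => Finset.univ.filter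
      (fun a : PS r n => ∃ hm : Low u < n, a ⟨Low u, hm⟩ p.1 = a ⟨Low u, hm⟩ p.2) with hEf
  have hcard1 : Fintype.card {a : PS r n // ¬ Pred r u n a}
      = (Finset.univ.filter (fun a : PS r n => ¬ Pred r u n a)).card :=
    Fintype.card_subtype _
  have hsub : (Finset.univ.filter (fun a : PS r n => ¬ Pred r u n a)) ⊆
      pairsF.biUnion Ef := by
    intro a ha
    simp only [Finset.mem_filter, Finset.mem_univ, true_and] at ha
    rw [Pred] at ha
    push_neg at ha
    obtain ⟨i, j, hi, hj, hij, hm, heq⟩ := ha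
    refine Finset.mem_biUnion.mpr ⟨(i, j), ?_, ?_⟩
    · simp [hpairs, hi, hj, hij]
    · simp only [hEf, Finset.mem_filter, Finset.mem_univ, true_and]
      exact ⟨hm, heq⟩
  have hb1 : (Finset.univ.filter (fun a : PS r n => ¬ Pred r u n a)).card ≤
      ∑ p ∈ pairsF, (Ef p).card :=
    le_trans (Finset.card_le_card hsub) (Finset.card_biUnion_le)
  have hpairsle : pairsF.card ≤ (u.filter (· < n)).card * (u.filter (· < n)).card := by
    have : pairsF.card ≤ ((u.filter (· < n)) ×ˢ (u.filter (· < n))).card := by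
      apply Finset.card_le_card_of_injOn (fun p => ((p.1 : ℕ), (p.2 : ℕ)))
      · intro p hp
        simp only [Finset.mem_coe, hpairs, Finset.mem_filter, Finset.mem_univ, true_and] at hp
        simp only [Finset.mem_coe, Finset.mem_product, Finset.mem_filter]
        exact ⟨⟨hp.1, p.1.2⟩, ⟨hp.2.1, p.2.2⟩⟩
      · intro p _ q _ hpq
        simp only [Prod.mk.injEq] at hpq
        exact Prod.ext (Fin.ext hpq.1) (Fin.ext hpq.2)
    simpa [Finset.card_product] using this
  calc Fintype.card {a : PS r n // ¬ Pred r u n a} * (r (Low u) + 1)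
      ≤ (∑ p ∈ pairsF, (Ef p).card) * (r (Low u) + 1) := by
        rw [hcard1]; exact Nat.mul_le_mul_right _ hb1
    _ = ∑ p ∈ pairsF, (Ef p).card * (r (Low u) + 1) := by rw [Finset.sum_mul]
    _ ≤ ∑ p ∈ pairsF, csize r n := by
        apply Finset.sum_le_sum
        intro p hp
        simp only [hpairs, Finset.mem_filter, Finset.mem_univ, true_and] at hp
        exact card_E_mul r u n p hp.2.2
    _ = pairsF.card * csize r n := by rw [Finset.sum_const, smul_eq_mul]
    _ ≤ ((u.filter (· < n)).card * (u.filter (· < n)).card) * csize r n :=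
        Nat.mul_le_mul_right _ hpairsle

lemma card_Dfin_ge (u : Finset ℕ) (n : ℕ) {ε : ℝ} (hε0 : 0 < ε)
    (hb : (((u.filter (· < n)).card : ℝ)) * (((u.filter (· < n)).card : ℝ)) ≤
      ε * ((r (Low u) + 1 : ℕ) : ℝ)) :
    (1 - ε) * ((blk r n).card : ℝ) ≤ ((Dfin r u n).card : ℝ) := by
  classical
  have hcompl : Fintype.card {a : PS r n // ¬ Pred r u n a} =
      csize r n - Fintype.card {a : PS r n // Pred r u n a} :=
    Fintype.card_subtype_compl _
  have hle : Fintype.card {a : PS r n // Pred r u n a} ≤ csize r n :=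
    Fintype.card_subtype_le _
  set B := Fintype.card {a : PS r n // ¬ Pred r u n a} with hB
  set G := Fintype.card {a : PS r n // Pred r u n a} with hG
  have hBG : G = csize r n - B := by omega
  have hBle : B ≤ csize r n := by omega
  have hmul := card_bad_mul r u n
  set t := (u.filter (· < n)).card with ht
  set R : ℝ := ((r (Low u) + 1 : ℕ) : ℝ) with hR
  have hmulR : (B : ℝ) * R ≤ ((t : ℝ) * (t : ℝ)) * (csize r n : ℝ) := by
    rw [hR]
    have : ((B * (r (Low u) + 1) : ℕ) : ℝ) ≤ ((t * t * csize r n : ℕ) : ℝ) := by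
      exact_mod_cast hmul
    push_cast at this ⊢
    linarith
  have hrpos : (0 : ℝ) < R := by rw [hR]; positivity
  have hcs : (0:ℝ) ≤ (csize r n : ℝ) := Nat.cast_nonneg _
  have hBR : (B : ℝ) ≤ ε * (csize r n : ℝ) := by
    have h2 : ((t:ℝ) * (t:ℝ)) * (csize r n : ℝ) ≤ (ε * R) * (csize r n : ℝ) :=
      mul_le_mul_of_nonneg_right hb hcs
    have h3 : (B : ℝ) * R ≤ (ε * (csize r n : ℝ)) * R := by
      calc (B : ℝ) * R ≤ (ε * R) * (csize r n : ℝ) := le_trans hmulR h2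
        _ = (ε * (csize r n : ℝ)) * R := by ring
    exact le_of_mul_le_mul_right h3 hrpos
  have hDcard : ((Dfin r u n).card : ℝ) = (csize r n : ℝ) - (B : ℝ) := by
    rw [card_Dfin, ← hG, hBG]
    push_cast [Nat.cast_sub hBle]
    ring
  rw [hDcard, card_blk]
  nlinarith


section Ramsey

lemma exists_infinite_fiber' {α : Type*} [Finite α] (f : ℕ → α) {S : Set ℕ} (hS : S.Infinite) :
    ∃ v, {n | n ∈ S ∧ f n = v}.Infinite := by
  by_contra h
  push_neg at h
  have h : ∀ v, {n | n ∈ S ∧ f n = v}.Finite := fun v => by simpa using h v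
  have hcover : S ⊆ ⋃ v, {n | n ∈ S ∧ f n = v} := by
    intro n hn
    exact Set.mem_iUnion.mpr ⟨f n, hn, rfl⟩
  exact hS ((Set.finite_iUnion h).subset hcover)

lemma rStep_ex {α : Type*} [Finite α] (c : ℕ → ℕ → α) (A : {A : Set ℕ // A.Infinite}) :
    ∃ B : Set ℕ, B.Infinite ∧ B ⊆ A.1 ∧ (∀ n ∈ B, sInf A.1 < n) ∧
      (∀ n ∈ B, ∀ n' ∈ B, c (sInf A.1) n = c (sInf A.1) n') := by
  have hA' : {n | n ∈ A.1 ∧ sInf A.1 < n}.Infinite := by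
    have heq : {n | n ∈ A.1 ∧ sInf A.1 < n} = A.1 \ {n | n ≤ sInf A.1} := by
      ext n
      simp only [Set.mem_setOf_eq, Set.mem_diff, not_le]
    rw [heq]
    exact A.2.diff (Set.finite_Iic (sInf A.1))
  obtain ⟨v, hv⟩ := exists_infinite_fiber' (c (sInf A.1)) hA'
  refine ⟨{n | (n ∈ A.1 ∧ sInf A.1 < n) ∧ c (sInf A.1) n = v}, ?_, ?_, ?_, ?_⟩
  · exact hv
  · intro n hn; exact hn.1.1
  · intro n hn; exact hn.1.2
  · intro n hn n' hn'; rw [hn.2, hn'.2]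

noncomputable def rStep {α : Type*} [Finite α] (c : ℕ → ℕ → α)
    (A : {A : Set ℕ // A.Infinite}) : {B : Set ℕ // B.Infinite} :=
  ⟨(rStep_ex c A).choose, (rStep_ex c A).choose_spec.1⟩

lemma rStep_subset {α : Type*} [Finite α] (c : ℕ → ℕ → α) (A : {A : Set ℕ // A.Infinite}) :
    (rStep c A).1 ⊆ A.1 := (rStep_ex c A).choose_spec.2.1

lemma rStep_lt {α : Type*} [Finite α] (c : ℕ → ℕ → α) (A : {A : Set ℕ // A.Infinite}) :
    ∀ n ∈ (rStep c A).1, sInf A.1 < n := (rStep_ex c A).choose_spec.2.2.1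

lemma rStep_color {α : Type*} [Finite α] (c : ℕ → ℕ → α) (A : {A : Set ℕ // A.Infinite}) :
    ∀ n ∈ (rStep c A).1, ∀ n' ∈ (rStep c A).1,
      c (sInf A.1) n = c (sInf A.1) n' := (rStep_ex c A).choose_spec.2.2.2

noncomputable def rChain {α : Type*} [Finite α] (c : ℕ → ℕ → α)
    (A0 : {A : Set ℕ // A.Infinite}) (k : ℕ) : {A : Set ℕ // A.Infinite} :=
  (rStep c)^[k] A0

lemma rChain_zero {α : Type*} [Finite α] (c : ℕ → ℕ → α) (A0 : {A : Set ℕ // A.Infinite}) :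
    rChain c A0 0 = A0 := rfl

lemma rChain_succ {α : Type*} [Finite α] (c : ℕ → ℕ → α) (A0 : {A : Set ℕ // A.Infinite})
    (k : ℕ) : rChain c A0 (k + 1) = rStep c (rChain c A0 k) :=
  Function.iterate_succ_apply' _ _ _

noncomputable def aseq {α : Type*} [Finite α] (c : ℕ → ℕ → α)
    (A0 : {A : Set ℕ // A.Infinite}) (k : ℕ) : ℕ :=
  sInf (rChain c A0 k).1

lemma aseq_mem {α : Type*} [Finite α] (c : ℕ → ℕ → α) (A0 : {A : Set ℕ // A.Infinite})
    (k : ℕ) : aseq c A0 k ∈ (rChain c A0 k).1 :=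
  Nat.sInf_mem ((rChain c A0 k).2.nonempty)

lemma rChain_anti {α : Type*} [Finite α] (c : ℕ → ℕ → α) (A0 : {A : Set ℕ // A.Infinite})
    {k j : ℕ} (h : k ≤ j) : (rChain c A0 j).1 ⊆ (rChain c A0 k).1 := by
  induction j with
  | zero => simp_all
  | succ j ih =>
    rcases Nat.lt_or_ge k (j+1) with hlt | hge
    · have h1 : (rChain c A0 (j+1)).1 ⊆ (rChain c A0 j).1 := by
        rw [rChain_succ]
        exact rStep_subset c _
      exact h1.trans (ih (Nat.lt_succ_iff.mp hlt))
    · have : k = j + 1 := le_antisymm h hge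
      subst this
      exact subset_rfl

lemma aseq_strictMono {α : Type*} [Finite α] (c : ℕ → ℕ → α) (A0 : {A : Set ℕ // A.Infinite}) :
    StrictMono (aseq c A0) := by
  apply strictMono_nat_of_lt_succ
  intro k
  have h := rStep_lt c (rChain c A0 k) _ (by rw [← rChain_succ]; exact aseq_mem c A0 (k+1))
  exact h

lemma aseq_color {α : Type*} [Finite α] (c : ℕ → ℕ → α) (A0 : {A : Set ℕ // A.Infinite})
    {k j : ℕ} (h : k < j) :
    c (aseq c A0 k) (aseq c A0 j) = c (aseq c A0 k) (aseq c A0 (k + 1)) := by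
  have h1 : aseq c A0 j ∈ (rChain c A0 (k+1)).1 :=
    rChain_anti c A0 h (aseq_mem c A0 j)
  have h2 : aseq c A0 (k+1) ∈ (rChain c A0 (k+1)).1 := aseq_mem c A0 (k+1)
  rw [rChain_succ] at h1 h2
  exact rStep_color c (rChain c A0 k) _ h1 _ h2

lemma pair_ramsey {α : Type*} [Finite α] (c : ℕ → ℕ → α) {S : Set ℕ} (hS : S.Infinite) :
    ∃ T : Set ℕ, T ⊆ S ∧ T.Infinite ∧ ∃ v, ∀ i ∈ T, ∀ n ∈ T, i < n → c i n = v := by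
  set A0 : {A : Set ℕ // A.Infinite} := ⟨S, hS⟩ with hA0
  obtain ⟨v, hv⟩ := exists_infinite_fiber'
    (fun k => c (aseq c A0 k) (aseq c A0 (k + 1))) (Set.infinite_univ (α := ℕ))
  refine ⟨aseq c A0 '' {k | k ∈ Set.univ ∧ c (aseq c A0 k) (aseq c A0 (k + 1)) = v}, ?_, ?_, v, ?_⟩
  · rintro x ⟨k, _, rfl⟩
    have := rChain_anti c A0 (Nat.zero_le k) (aseq_mem c A0 k)
    rwa [rChain_zero] at this
  · exact hv.image ((aseq_strictMono c A0).injective.injOn)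
  · rintro i ⟨k, hk, rfl⟩ n ⟨j, hj, rfl⟩ hlt
    have hkj : k < j := (aseq_strictMono c A0).lt_iff_lt.mp hlt
    rw [aseq_color c A0 hkj]
    exact hk.2

end Ramsey

def iterChain {X : Type*} (A0 : X) (F : ℕ → X → X) : ℕ → X
  | 0 => A0
  | k + 1 => F (k + 1) (iterChain A0 F k)

def diagSeq (R : ℕ → Set ℕ) : ℕ → ℕ
  | 0 => sInf (R 1)
  | k + 1 => sInf {n | n ∈ R (diagSeq R k + 1) ∧ diagSeq R k < n}


def sU (u : Finset ℕ) : Finset ℕ :=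
  blk r (Low u) ∪ (u.erase (Low u)).biUnion (fun n => Dfin r u n)

def Fam : Set (Finset ℕ) :=
  {s | ∃ u : Finset ℕ, (∃ h : u.Nonempty, u.card = u.min' h) ∧ s = sU r u}

lemma Low_lt {u : Finset ℕ} {n : ℕ} (hn : n ∈ u) (hne : n ≠ Low u) : Low u < n :=
  lt_of_le_of_ne (Low_le hn) (Ne.symm hne)

lemma blk_low_subset_sU (u : Finset ℕ) : blk r (Low u) ⊆ sU r u :=
  Finset.subset_union_left

lemma Dfin_subset_sU {u : Finset ℕ} {n : ℕ} (hn : n ∈ u) (hne : n ≠ Low u) :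
    Dfin r u n ⊆ sU r u := by
  intro x hx
  exact Finset.mem_union_right _
    (Finset.mem_biUnion.mpr ⟨n, Finset.mem_erase.mpr ⟨hne, hn⟩, hx⟩)

lemma blk_of_mem_sU {u : Finset ℕ} {n x : ℕ} (hu : u.Nonempty)
    (hx : x ∈ sU r u) (hxb : x ∈ blk r n) :
    n ∈ u ∧ (n ≠ Low u → x ∈ Dfin r u n) := by
  rcases Finset.mem_union.mp hx with h1 | h2
  · have : n = Low u := (pIdx_eq r hxb).symm.trans (pIdx_eq r h1)
    subst this
    exact ⟨Low_mem hu, fun h => absurd rfl h⟩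
  · obtain ⟨n', hn', hx'⟩ := Finset.mem_biUnion.mp h2
    have hxb' : x ∈ blk r n' := Dfin_subset_blk r u n' hx'
    have : n = n' := (pIdx_eq r hxb).symm.trans (pIdx_eq r hxb')
    subst this
    exact ⟨(Finset.mem_erase.mp hn').2, fun _ => hx'⟩

lemma sU_inter_low (u : Finset ℕ) : sU r u ∩ blk r (Low u) = blk r (Low u) :=
  Finset.inter_eq_right.mpr (blk_low_subset_sU r u)

lemma sU_inter_mem {u : Finset ℕ} {n : ℕ} (hu : u.Nonempty) (hn : n ∈ u) (hne : n ≠ Low u) :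
    sU r u ∩ blk r n = Dfin r u n := by
  apply Finset.Subset.antisymm
  · intro x hx
    rw [Finset.mem_inter] at hx
    exact (blk_of_mem_sU r hu hx.1 hx.2).2 hne
  · intro x hx
    exact Finset.mem_inter.mpr ⟨Dfin_subset_sU r hn hne hx, Dfin_subset_blk r u n hx⟩

lemma sU_inter_not {u : Finset ℕ} {n : ℕ} (hu : u.Nonempty) (hn : n ∉ u) :
    sU r u ∩ blk r n = ∅ := by
  rw [Finset.eq_empty_iff_forall_notMem]
  intro x hx
  rw [Finset.mem_inter] at hx
  exact hn (blk_of_mem_sU r hu hx.1 hx.2).1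

lemma image_pIdx_sU (u : Finset ℕ) (hu : u.Nonempty)
    (hD : ∀ n ∈ u.erase (Low u), (Dfin r u n).Nonempty) :
    (sU r u).image (pIdx r) = u := by
  ext n
  rw [Finset.mem_image]
  constructor
  · rintro ⟨x, hx, rfl⟩
    exact (blk_of_mem_sU r hu hx (mem_blk_pIdx r x)).1
  · intro hn
    by_cases hne : n = Low u
    · obtain ⟨x, hx⟩ := blk_nonempty r (Low u)
      refine ⟨x, blk_low_subset_sU r u hx, ?_⟩
      rw [hne]
      exact pIdx_eq r hx
    · obtain ⟨x, hx⟩ := hD n (Finset.mem_erase.mpr ⟨hne, hn⟩)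
      exact ⟨x, Dfin_subset_sU r hn hne hx, pIdx_eq r (Dfin_subset_blk r u n hx)⟩


lemma three_of_card (A : Finset ℕ) (h : 3 ≤ A.card) :
    ∃ a ∈ A, ∃ b ∈ A, ∃ c ∈ A, a < b ∧ b < c := by
  have hne : A.Nonempty := Finset.card_pos.mp (by omega)
  have hcA := A.max'_mem hne
  have hA1c : (A.erase (A.max' hne)).card = A.card - 1 := Finset.card_erase_of_mem hcA
  have hne1 : (A.erase (A.max' hne)).Nonempty := Finset.card_pos.mp (by omega)
  have hbA1 := (A.erase (A.max' hne)).max'_mem hne1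
  set b := (A.erase (A.max' hne)).max' hne1 with hbdef
  have hA2c : ((A.erase (A.max' hne)).erase b).card = (A.erase (A.max' hne)).card - 1 :=
    Finset.card_erase_of_mem hbA1
  have hne2 : ((A.erase (A.max' hne)).erase b).Nonempty := Finset.card_pos.mp (by omega)
  set a := ((A.erase (A.max' hne)).erase b).max' hne2 with hadef
  have haA2 := ((A.erase (A.max' hne)).erase b).max'_mem hne2
  have haA1 : a ∈ A.erase (A.max' hne) := Finset.erase_subset _ _ haA2
  have hbA : b ∈ A := Finset.erase_subset _ _ hbA1
  have haA : a ∈ A := Finset.erase_subset _ _ haA1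
  refine ⟨a, haA, b, hbA, A.max' hne, hcA, ?_, ?_⟩
  · exact lt_of_le_of_ne ((A.erase (A.max' hne)).le_max' a haA1) (Finset.ne_of_mem_erase haA2)
  · exact lt_of_le_of_ne (A.le_max' b hbA) (Finset.ne_of_mem_erase hbA1)

lemma card_le_three (A : Finset ℕ) (h : ∀ a ∈ A, (A.filter (· < a)).card ≤ 2) :
    A.card ≤ 3 := by
  by_contra hc
  push_neg at hc
  have hne : A.Nonempty := Finset.card_pos.mp (by omega)
  have key : A.filter (· < A.max' hne) = A.erase (A.max' hne) := by
    ext x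
    simp only [Finset.mem_filter, Finset.mem_erase]
    constructor
    · rintro ⟨hx, hlt⟩
      exact ⟨ne_of_lt hlt, hx⟩
    · rintro ⟨hne', hx⟩
      exact ⟨hx, lt_of_le_of_ne (A.le_max' x hx) hne'⟩
  have h2 := h (A.max' hne) (A.max'_mem hne)
  rw [key, Finset.card_erase_of_mem (A.max'_mem hne)] at h2
  omega

end TFaux

end



/-- `F` is a pre-compact family: every subset of `ℕ` in the closure of `F` inside `2^ℕ`
(with the product topology) is finite. -/
def IsPrecompactFam (F : Set (Finset ℕ)) : Prop :=
  ∀ X : Set ℕ, (∀ t : Finset ℕ, ∃ s ∈ F, ∀ k ∈ t, (k ∈ X ↔ k ∈ s)) → X.Finite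

/-- `s[λ] = {n : #(s ∩ Iₙ) ≥ λ #Iₙ}`, where `π` assigns to each point the index of its piece. -/
noncomputable def secLam (In : ℕ → Finset ℕ) (π : ℕ → ℕ) (lam : ℝ) (s : Finset ℕ) : Finset ℕ :=
  (s.image π).filter fun n => lam * ((In n).card : ℝ) ≤ ((s ∩ In n).card : ℝ)

/-- `G_λ(F) = {s[λ] : s ∈ F}`. -/
noncomputable def GLam (In : ℕ → Finset ℕ) (π : ℕ → ℕ) (lam : ℝ) (F : Set (Finset ℕ)) :
    Set (Finset ℕ) :=
  {t | ∃ s ∈ F, t = secLam In π lam s}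

/-- `G₊(F) = {s[+] : s ∈ F}`, where `s[+] = {n : s ∩ Iₙ ≠ ∅}`. -/
def GPlus (In : ℕ → Finset ℕ) (π : ℕ → ℕ) (F : Set (Finset ℕ)) : Set (Finset ℕ) :=
  {t | ∃ s ∈ F, t = s.image π}

/-- The Schreier barrier `{u : #u = min u}`. -/
def SchreierBarrier : Set (Finset ℕ) :=
  {u | ∃ h : u.Nonempty, u.card = u.min' h}

/-- For every `0 < ε < 1` there are a partition `ℕ = ⋃ₙ Iₙ` into finite sets (with index
map `π`) and a pre-compact family `F` of finite subsets of `ℕ` such that: (a) `F` is not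
`4`-large in any infinite `M` (every infinite `M` has an infinite subset `K` with
`#(s ∩ K) ≤ 3` for all `s ∈ F`); (b) `G_{1-ε}(F) = G₊(F) =` the Schreier barrier;
(c) each `s ∈ F` contains the whole first piece `Iₙ` that it meets. In particular,
`T`-families exist. -/
theorem exists_T_family (ε : ℝ) (hε0 : 0 < ε) (hε1 : ε < 1) :
    ∃ (In : ℕ → Finset ℕ) (π : ℕ → ℕ),
      (∀ n, (In n).Nonempty) ∧ (∀ m n, m ≠ n → Disjoint (In m) (In n)) ∧
      (∀ j, j ∈ In (π j)) ∧
      ∃ F : Set (Finset ℕ), IsPrecompactFam F ∧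
        (∀ M : Set ℕ, M.Infinite → ∃ K ⊆ M, K.Infinite ∧
          ∀ s ∈ F, ((↑s ∩ K : Set ℕ)).ncard ≤ 3) ∧
        GLam In π (1 - ε) F = SchreierBarrier ∧
        GPlus In π F = SchreierBarrier ∧
        (∀ s ∈ F, ∀ n : ℕ, (s ∩ In n).Nonempty → (∀ m < n, s ∩ In m = ∅) →
          s ∩ In n = In n) := by
  classical
  set q : ℕ := ⌈1 / ε⌉₊ with hq
  set r : ℕ → ℕ := fun m => m * m * q with hr
  have hεq : (1 : ℝ) ≤ ε * q := by
    have h1 : (1 / ε : ℝ) ≤ q := Nat.le_ceil _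
    calc (1 : ℝ) = ε * (1 / ε) := by field_simp
      _ ≤ ε * q := by nlinarith
  have hb_main : ∀ u : Finset ℕ, u.Nonempty → u.card = TFaux.Low u → ∀ n : ℕ,
      (((u.filter (· < n)).card : ℝ)) * (((u.filter (· < n)).card : ℝ)) ≤
        ε * ((r (TFaux.Low u) + 1 : ℕ) : ℝ) := by
    intro u hu hcard n
    have ht : (u.filter (· < n)).card ≤ TFaux.Low u := by
      rw [← hcard]
      exact Finset.card_le_card (Finset.filter_subset _ _)
    have htR : ((u.filter (· < n)).card : ℝ) ≤ ((TFaux.Low u : ℕ) : ℝ) := by exact_mod_cast ht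
    have ht0 : (0 : ℝ) ≤ ((u.filter (· < n)).card : ℝ) := Nat.cast_nonneg _
    have hm0 : (0 : ℝ) ≤ ((TFaux.Low u : ℕ) : ℝ) := Nat.cast_nonneg _
    have hstep : ((u.filter (· < n)).card : ℝ) * ((u.filter (· < n)).card : ℝ) ≤
        ((TFaux.Low u : ℕ) : ℝ) * ((TFaux.Low u : ℕ) : ℝ) := mul_le_mul htR htR ht0 hm0
    have hRcast : ((r (TFaux.Low u) + 1 : ℕ) : ℝ) =
        ((TFaux.Low u : ℕ) : ℝ) * ((TFaux.Low u : ℕ) : ℝ) * (q : ℝ) + 1 := by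
      rw [hr]
      push_cast
      ring
    have hfin : ((TFaux.Low u : ℕ) : ℝ) * ((TFaux.Low u : ℕ) : ℝ) ≤
        ε * ((r (TFaux.Low u) + 1 : ℕ) : ℝ) := by
      rw [hRcast]
      have hmm : (0 : ℝ) ≤ ((TFaux.Low u : ℕ) : ℝ) * ((TFaux.Low u : ℕ) : ℝ) :=
        mul_nonneg hm0 hm0
      nlinarith
    linarith
  have hDcard : ∀ u : Finset ℕ, u.Nonempty → u.card = TFaux.Low u → ∀ n : ℕ,
      (1 - ε) * ((TFaux.blk r n).card : ℝ) ≤ ((TFaux.Dfin r u n).card : ℝ) :=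
    fun u hu hc n => TFaux.card_Dfin_ge r u n hε0 (hb_main u hu hc n)
  have hDne : ∀ u : Finset ℕ, u.Nonempty → u.card = TFaux.Low u → ∀ n : ℕ,
      (TFaux.Dfin r u n).Nonempty := by
    intro u hu hc n
    have h1 : (0 : ℝ) < (1 - ε) * ((TFaux.blk r n).card : ℝ) := by
      have hb := TFaux.blk_nonempty r n
      have : 0 < (TFaux.blk r n).card := Finset.card_pos.mpr hb
      have : (0 : ℝ) < ((TFaux.blk r n).card : ℝ) := by exact_mod_cast this
      nlinarith
    have h2 := lt_of_lt_of_le h1 (hDcard u hu hc n)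
    have : 0 < (TFaux.Dfin r u n).card := by exact_mod_cast h2
    exact Finset.card_pos.mp this
  have hSch_low : ∀ (u : Finset ℕ) (hu : u.Nonempty), u.card = u.min' hu →
      u.card = TFaux.Low u := by
    intro u hu h
    rw [TFaux.Low_eq_min' hu]
    exact h
  have hImage : ∀ (u : Finset ℕ), u.Nonempty → u.card = TFaux.Low u →
      (TFaux.sU r u).image (TFaux.pIdx r) = u := by
    intro u hu hc
    exact TFaux.image_pIdx_sU r u hu (fun n _ => hDne u hu hc n)
  have hsec : ∀ (u : Finset ℕ), u.Nonempty → u.card = TFaux.Low u →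
      secLam (TFaux.blk r) (TFaux.pIdx r) (1 - ε) (TFaux.sU r u) = u := by
    intro u hu hc
    rw [secLam, hImage u hu hc]
    apply Finset.filter_true_of_mem
    intro n hn
    by_cases hne : n = TFaux.Low u
    · rw [hne, TFaux.sU_inter_low]
      have h0 : (0 : ℝ) ≤ ((TFaux.blk r (TFaux.Low u)).card : ℝ) := Nat.cast_nonneg _
      nlinarith
    · rw [TFaux.sU_inter_mem r hu hn hne]
      exact hDcard u hu hc n
  refine ⟨TFaux.blk r, TFaux.pIdx r, TFaux.blk_nonempty r,
    fun m n h => TFaux.blk_disj r h, TFaux.mem_blk_pIdx r, TFaux.Fam r, ?_, ?_, ?_, ?_, ?_⟩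
  · -- precompactness
    intro X hX
    by_contra hinf
    have hXi : X.Infinite := hinf
    obtain ⟨z, hzX⟩ := hXi.nonempty
    have hbig : ∀ B : ℕ, ∃ y ∈ X, B < TFaux.pIdx r y := by
      intro B
      by_contra h
      push_neg at h
      apply hinf
      have hsub : X ⊆ ⋃ n ∈ Finset.range (B + 1), (↑(TFaux.blk r n) : Set ℕ) := by
        intro y hy
        have h1 := TFaux.mem_blk_pIdx r y
        have h2 := h y hy
        exact Set.mem_biUnion (Finset.mem_range.mpr (by omega)) h1
      exact Set.Finite.subset
        (Set.Finite.biUnion (Finset.range (B + 1)).finite_toSet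
          (fun n _ => (TFaux.blk r n).finite_toSet)) hsub
    choose f hfX hfgt using hbig
    set seq : ℕ → ℕ := fun k => Nat.rec z (fun _ ih => f (TFaux.pIdx r ih)) k with hseqd
    have hseqs : ∀ k, seq (k + 1) = f (TFaux.pIdx r (seq k)) := fun k => rfl
    have hseqX : ∀ k, seq k ∈ X := by
      intro k
      induction k with
      | zero => exact hzX
      | succ k ih =>
        rw [hseqs]
        exact hfX _
    have hpmono : StrictMono (fun k => TFaux.pIdx r (seq k)) := by
      apply strictMono_nat_of_lt_succ
      intro k
      show TFaux.pIdx r (seq k) < TFaux.pIdx r (seq (k + 1))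
      rw [hseqs]
      exact hfgt _
    set nb := TFaux.pIdx r z with hnb
    obtain ⟨s, hsF, hmatch⟩ := hX ((Finset.range (nb + 2)).image seq)
    obtain ⟨u, ⟨hu, hcard⟩, rfl⟩ := hsF
    have hsmem : ∀ k < nb + 2, seq k ∈ TFaux.sU r u := by
      intro k hk
      have hkt : seq k ∈ (Finset.range (nb + 2)).image seq :=
        Finset.mem_image.mpr ⟨k, Finset.mem_range.mpr hk, rfl⟩
      exact (hmatch _ hkt).mp (hseqX k)
    have himg := hImage u hu (hSch_low u hu hcard)
    have hsub2 : (Finset.range (nb + 2)).image (fun k => TFaux.pIdx r (seq k)) ⊆ u := by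
      intro x hx
      obtain ⟨k, hk, rfl⟩ := Finset.mem_image.mp hx
      rw [← himg]
      exact Finset.mem_image.mpr ⟨seq k, hsmem k (Finset.mem_range.mp hk), rfl⟩
    have hcard2 : nb + 2 ≤ u.card := by
      calc nb + 2 = (Finset.range (nb + 2)).card := (Finset.card_range _).symm
        _ = ((Finset.range (nb + 2)).image (fun k => TFaux.pIdx r (seq k))).card :=
            (Finset.card_image_of_injective _ hpmono.injective).symm
        _ ≤ u.card := Finset.card_le_card hsub2
    have hnbu : nb ∈ u := by
      rw [← himg]
      exact Finset.mem_image.mpr ⟨z, hsmem 0 (by omega), rfl⟩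
    have hminle : u.card ≤ nb := by
      rw [hcard]
      exact Finset.min'_le _ _ hnbu
    omega
  · -- largeness
    intro M hM
    set N0 : Set ℕ := {n | ∃ x, x ∈ M ∧ x ∈ TFaux.blk r n} with hN0
    have hN0inf : N0.Infinite := by
      by_contra h
      rw [Set.not_infinite] at h
      apply hM
      have hsub : M ⊆ ⋃ n ∈ N0, (↑(TFaux.blk r n) : Set ℕ) := by
        intro y hy
        exact Set.mem_biUnion (show TFaux.pIdx r y ∈ N0 from ⟨y, hy, TFaux.mem_blk_pIdx r y⟩)
          (TFaux.mem_blk_pIdx r y)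
      exact Set.Finite.subset (h.biUnion (fun n _ => (TFaux.blk r n).finite_toSet)) hsub
    set xp : ℕ → ℕ := fun n => if h : n ∈ N0 then h.choose else 0 with hxp
    have hxpM : ∀ n ∈ N0, xp n ∈ M := by
      intro n h
      simp only [hxp]
      rw [dif_pos h]
      exact h.choose_spec.1
    have hxpB : ∀ n ∈ N0, xp n ∈ TFaux.blk r n := by
      intro n h
      simp only [hxp]
      rw [dif_pos h]
      exact h.choose_spec.2
    set tup : (n : ℕ) → TFaux.PS r n := fun n =>
      if h : n ∈ N0 then TFaux.dec r n ⟨xp n, hxpB n h⟩ else Classical.arbitrary _ with htup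
    have htupdef : ∀ (n : ℕ) (h : n ∈ N0), tup n = TFaux.dec r n ⟨xp n, hxpB n h⟩ := by
      intro n h
      simp only [htup]
      rw [dif_pos h]
    set cfun : (ℓ : ℕ) → ℕ → ℕ → Fin (r ℓ + 1) := fun ℓ i n =>
      if h : ℓ < n ∧ i < n then tup n ⟨ℓ, h.1⟩ ⟨i, h.2⟩ else ⟨0, Nat.succ_pos _⟩ with hcf
    set step : ℕ → {A : Set ℕ // A.Infinite} → {A : Set ℕ // A.Infinite} := fun ℓ A =>
      ⟨(TFaux.pair_ramsey (cfun ℓ) A.2).choose,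
        (TFaux.pair_ramsey (cfun ℓ) A.2).choose_spec.2.1⟩ with hstepd
    have hstep_sub : ∀ ℓ A, (step ℓ A).1 ⊆ A.1 :=
      fun ℓ A => (TFaux.pair_ramsey (cfun ℓ) A.2).choose_spec.1
    have hstep_hom : ∀ ℓ A, ∃ v, ∀ i ∈ (step ℓ A).1, ∀ n ∈ (step ℓ A).1, i < n →
        cfun ℓ i n = v :=
      fun ℓ A => (TFaux.pair_ramsey (cfun ℓ) A.2).choose_spec.2.2
    set Rf : ℕ → {A : Set ℕ // A.Infinite} := TFaux.iterChain ⟨N0, hN0inf⟩ step with hRfd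
    have hRf0 : (Rf 0).1 = N0 := rfl
    have hRfs : ∀ ℓ, Rf (ℓ + 1) = step (ℓ + 1) (Rf ℓ) := fun ℓ => rfl
    have hRf_anti : ∀ {k j : ℕ}, k ≤ j → (Rf j).1 ⊆ (Rf k).1 := by
      intro k j h
      induction j with
      | zero =>
        have : k = 0 := by omega
        subst this
        exact subset_rfl
      | succ j ih =>
        rcases Nat.lt_or_ge k (j + 1) with hlt | hge
        · have h1 : (Rf (j + 1)).1 ⊆ (Rf j).1 := by
            rw [hRfs]
            exact hstep_sub _ _
          exact h1.trans (ih (Nat.lt_succ_iff.mp hlt))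
        · have : k = j + 1 := le_antisymm h hge
          subst this
          exact subset_rfl
    have hRf_N0 : ∀ ℓ, (Rf ℓ).1 ⊆ N0 := by
      intro ℓ
      have := hRf_anti (Nat.zero_le ℓ)
      rwa [hRf0] at this
    have hRf_hom : ∀ ℓ, ∃ v, ∀ i ∈ (Rf (ℓ + 1)).1, ∀ n ∈ (Rf (ℓ + 1)).1, i < n →
        cfun (ℓ + 1) i n = v := by
      intro ℓ
      rw [hRfs]
      exact hstep_hom _ _
    have hRf_hom' : ∀ ℓ, 1 ≤ ℓ → ∃ v, ∀ i ∈ (Rf ℓ).1, ∀ n ∈ (Rf ℓ).1, i < n →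
        cfun ℓ i n = v := by
      intro ℓ hℓ
      obtain ⟨ℓ', rfl⟩ : ∃ ℓ', ℓ = ℓ' + 1 := ⟨ℓ - 1, by omega⟩
      exact hRf_hom ℓ'
    set ns : ℕ → ℕ := TFaux.diagSeq (fun ℓ => (Rf ℓ).1) with hnsd
    have hns0 : ns 0 = sInf (Rf 1).1 := rfl
    have hnss : ∀ k, ns (k + 1) = sInf {n | n ∈ (Rf (ns k + 1)).1 ∧ ns k < n} := fun k => rfl
    have hmem0 : ns 0 ∈ (Rf 1).1 := by
      rw [hns0]
      exact Nat.sInf_mem (Rf 1).2.nonempty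
    have hmemS : ∀ k, ns (k + 1) ∈ (Rf (ns k + 1)).1 ∧ ns k < ns (k + 1) := by
      intro k
      have hinfset : {n | n ∈ (Rf (ns k + 1)).1 ∧ ns k < n}.Infinite := by
        have heq : {n | n ∈ (Rf (ns k + 1)).1 ∧ ns k < n} =
            (Rf (ns k + 1)).1 \ {n | n ≤ ns k} := by
          ext n
          simp only [Set.mem_setOf_eq, Set.mem_diff, not_le]
        rw [heq]
        exact (Rf (ns k + 1)).2.diff (Set.finite_Iic (ns k))
      have := Nat.sInf_mem hinfset.nonempty
      rw [← hnss] at this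
      exact this
    have hns_mono : StrictMono ns := strictMono_nat_of_lt_succ (fun k => (hmemS k).2)
    have hns_N0 : ∀ k, ns k ∈ N0 := by
      intro k
      cases k with
      | zero => exact hRf_N0 1 hmem0
      | succ k => exact hRf_N0 _ (hmemS k).1
    have hkey : ∀ (m a b : ℕ), a ∈ Set.range ns → b ∈ Set.range ns → a < b → m ≤ a →
        b ∈ (Rf m).1 := by
      rintro m a b ⟨ka, rfl⟩ ⟨kb, rfl⟩ hab hma
      have hkab : ka < kb := hns_mono.lt_iff_lt.mp hab
      obtain ⟨kb', rfl⟩ : ∃ kb', kb = kb' + 1 := ⟨kb - 1, by omega⟩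
      have h1 : ns ka ≤ ns kb' := hns_mono.monotone (by omega)
      exact hRf_anti (by omega : m ≤ ns kb' + 1) (hmemS kb').1
    have hxpinj : Set.InjOn xp (Set.range ns) := by
      rintro a ⟨ka, rfl⟩ b ⟨kb, rfl⟩ hab
      have h1 := TFaux.pIdx_eq r (hxpB _ (hns_N0 ka))
      have h2 := TFaux.pIdx_eq r (hxpB _ (hns_N0 kb))
      rw [← h1, ← h2, hab]
    refine ⟨xp '' Set.range ns, ?_, ?_, ?_⟩
    · rintro y ⟨n, ⟨k, rfl⟩, rfl⟩
      exact hxpM _ (hns_N0 k)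
    · exact ((Set.infinite_range_of_injective hns_mono.injective).image hxpinj)
    · rintro s ⟨u, ⟨hu, hcard⟩, rfl⟩
      have hclow := hSch_low u hu hcard
      have hm1 : 1 ≤ TFaux.Low u := by
        by_contra h
        push_neg at h
        have h0 : TFaux.Low u = 0 := by omega
        have : u.card = 0 := by rw [hclow, h0]
        exact hu.ne_empty (Finset.card_eq_zero.mp this)
      set W : Finset ℕ :=
        u.filter (fun n => n ∈ Set.range ns ∧ xp n ∈ TFaux.sU r u) with hW
      have hWsub : (↑(TFaux.sU r u) : Set ℕ) ∩ (xp '' Set.range ns) ⊆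
          (↑(W.image xp) : Set ℕ) := by
        rintro y ⟨hys, n, hnr, rfl⟩
        have hnN0 : n ∈ N0 := by
          obtain ⟨k, rfl⟩ := hnr
          exact hns_N0 k
        have hysF : xp n ∈ TFaux.sU r u := hys
        have hnu : n ∈ u := (TFaux.blk_of_mem_sU r hu hysF (hxpB n hnN0)).1
        exact Finset.mem_coe.mpr
          (Finset.mem_image.mpr ⟨n, Finset.mem_filter.mpr ⟨hnu, hnr, hysF⟩, rfl⟩)
      have hWb : ∀ a ∈ W, (W.filter (· < a)).card ≤ 2 := by
        intro a haW
        by_contra hgt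
        push_neg at hgt
        obtain ⟨b1, hb1, b2, hb2, b3, hb3, h12, h23⟩ :=
          TFaux.three_of_card (W.filter (· < a)) (by omega)
        rw [Finset.mem_filter] at hb1 hb2 hb3
        have hb1W := hb1.1
        have hb2W := hb2.1
        have hb3W := hb3.1
        rw [hW, Finset.mem_filter] at haW hb1W hb2W hb3W
        have hmb1 : TFaux.Low u ≤ b1 := TFaux.Low_le hb1W.1
        have hb1a : b1 < a := hb1.2
        have hb2a : b2 < a := hb2.2
        have hb3a : b3 < a := hb3.2
        have hb2R : b2 ∈ (Rf (TFaux.Low u)).1 :=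
          hkey _ b1 b2 hb1W.2.1 hb2W.2.1 h12 hmb1
        have hb3R : b3 ∈ (Rf (TFaux.Low u)).1 :=
          hkey _ b1 b3 hb1W.2.1 hb3W.2.1 (h12.trans h23) hmb1
        have haR : a ∈ (Rf (TFaux.Low u)).1 :=
          hkey _ b1 a hb1W.2.1 haW.2.1 hb1a hmb1
        have haN0 : a ∈ N0 := by
          obtain ⟨k, hk⟩ := haW.2.1
          rw [← hk]
          exact hns_N0 k
        have hma : TFaux.Low u < a := by omega
        have hane : a ≠ TFaux.Low u := by omega
        have hau : a ∈ u := haW.1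
        have hxa : xp a ∈ TFaux.Dfin r u a :=
          (TFaux.blk_of_mem_sU r hu haW.2.2 (hxpB a haN0)).2 hane
        obtain ⟨hblk, hPred⟩ := (TFaux.mem_Dfin r).mp hxa
        obtain ⟨v, hv⟩ := hRf_hom' (TFaux.Low u) hm1
        have hc2 : cfun (TFaux.Low u) b2 a = v := hv b2 hb2R a haR hb2a
        have hc3 : cfun (TFaux.Low u) b3 a = v := hv b3 hb3R a haR hb3a
        have hcv2 : tup a ⟨TFaux.Low u, hma⟩ ⟨b2, hb2a⟩ = v := by
          simp only [hcf] at hc2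
          rwa [dif_pos (⟨hma, hb2a⟩ : TFaux.Low u < a ∧ b2 < a)] at hc2
        have hcv3 : tup a ⟨TFaux.Low u, hma⟩ ⟨b3, hb3a⟩ = v := by
          simp only [hcf] at hc3
          rwa [dif_pos (⟨hma, hb3a⟩ : TFaux.Low u < a ∧ b3 < a)] at hc3
        have heqq : tup a ⟨TFaux.Low u, hma⟩ ⟨b2, hb2a⟩ =
            tup a ⟨TFaux.Low u, hma⟩ ⟨b3, hb3a⟩ := by rw [hcv2, hcv3]
        rw [htupdef a haN0] at heqq
        have hPred' := hPred ⟨b2, hb2a⟩ ⟨b3, hb3a⟩ hb2W.1 hb3W.1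
          (by simpa using Nat.ne_of_lt h23) hma
        exact hPred' heqq
      have hWcard : W.card ≤ 3 := TFaux.card_le_three W hWb
      calc ((↑(TFaux.sU r u) : Set ℕ) ∩ (xp '' Set.range ns)).ncard
          ≤ (↑(W.image xp) : Set ℕ).ncard :=
            Set.ncard_le_ncard hWsub (W.image xp).finite_toSet
        _ = (W.image xp).card := Set.ncard_coe_finset _
        _ ≤ W.card := Finset.card_image_le
        _ ≤ 3 := hWcard
  · -- GLam
    ext t
    constructor
    · rintro ⟨s, ⟨u, ⟨hu, hcard⟩, rfl⟩, rfl⟩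
      rw [hsec u hu (hSch_low u hu hcard)]
      exact ⟨hu, hcard⟩
    · rintro ⟨hu, hcard⟩
      exact ⟨TFaux.sU r t, ⟨t, ⟨hu, hcard⟩, rfl⟩, (hsec t hu (hSch_low t hu hcard)).symm⟩
  · -- GPlus
    ext t
    constructor
    · rintro ⟨s, ⟨u, ⟨hu, hcard⟩, rfl⟩, rfl⟩
      rw [hImage u hu (hSch_low u hu hcard)]
      exact ⟨hu, hcard⟩
    · rintro ⟨hu, hcard⟩
      exact ⟨TFaux.sU r t, ⟨t, ⟨hu, hcard⟩, rfl⟩,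
        (hImage t hu (hSch_low t hu hcard)).symm⟩
  · -- condition (c)
    rintro s ⟨u, ⟨hu, hcard⟩, rfl⟩ n hne hprev
    obtain ⟨x, hx⟩ := hne
    rw [Finset.mem_inter] at hx
    have hnu : n ∈ u := (TFaux.blk_of_mem_sU r hu hx.1 hx.2).1
    by_cases h : n = TFaux.Low u
    · rw [h]
      exact TFaux.sU_inter_low r u
    · exfalso
      have hlow : TFaux.Low u < n := TFaux.Low_lt hnu h
      have hthis := hprev (TFaux.Low u) hlow
      rw [TFaux.sU_inter_low] at hthis
      exact Finset.Nonempty.ne_empty (TFaux.blk_nonempty r (TFaux.Low u)) hthis
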